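/- Consider P^Λ(t+1) = diag(α) Ã P^Λ(t) + (I - diag(α)) P^Λ(t) Δ₀, where Ã is row-stochastic, α ∈ (0,1)^n, and Δ₀ 1_{k₀} ⪯ c 1_{k₀} with c < 1. Then for any initial P^Λ(0) with nonnegative entries and row sums at most 1, P^Λ(t) → 0 exponentially fast as t → ∞. -/
import Mathlib


theorem stmt_6 (n k₀ : ℕ) (α : Fin n → ℝ) (hα : ∀ i, 0 < α i ∧ α i < 1)
    (Atil : Matrix (Fin n) (Fin n) ℝ)
    (hA0 : ∀ i j, 0 ≤ Atil i j) (hA1 : ∀ i, ∑ j, Atil i j = 1)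
    (c : ℝ) (hc0 : 0 ≤ c) (hc1 : c < 1)
    (Δ₀ : Matrix (Fin k₀) (Fin k₀) ℝ) (hΔ0 : ∀ i j, 0 ≤ Δ₀ i j)
    (hΔrow : ∀ i, ∑ j, Δ₀ i j ≤ c)
    (P : ℕ → Matrix (Fin n) (Fin k₀) ℝ)
    (hrec : ∀ t, P (t + 1) =
      Matrix.diagonal α * Atil * P t + (1 - Matrix.diagonal α) * P t * Δ₀)
    (hP0 : ∀ i r, 0 ≤ P 0 i r) (hP1 : ∀ i, ∑ r, P 0 i r ≤ 1) :
    ∃ C > (0 : ℝ), ∃ ξ : ℝ, 0 < ξ ∧ ξ < 1 ∧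
      ∀ t, (⨆ i, ∑ r, |P t i r|) ≤ C * ξ ^ t := by
  rcases Nat.eq_zero_or_pos n with hn | hn
  · refine ⟨1, one_pos, 1/2, by norm_num, by norm_num, fun t => ?_⟩
    subst hn
    haveI : IsEmpty (Fin 0) := inferInstance
    rw [Real.iSup_of_isEmpty]
    positivity
  · haveI : Nonempty (Fin n) := Fin.pos_iff_nonempty.mp hn
    -- entrywise recurrence
    have hentry : ∀ t i r, P (t+1) i r =
        α i * ∑ j, Atil i j * P t j r + (1 - α i) * ∑ s, P t i s * Δ₀ s r := by
      intro t i r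
      rw [hrec t]
      have h1 : (1 : Matrix (Fin n) (Fin n) ℝ) - Matrix.diagonal α
          = Matrix.diagonal (fun i => 1 - α i) := by
        rw [← Matrix.diagonal_one, Matrix.diagonal_sub]
      rw [Matrix.add_apply, h1, Matrix.mul_assoc, Matrix.diagonal_mul,
        Matrix.mul_apply, Matrix.mul_apply]
      simp only [Matrix.diagonal_mul, Finset.mul_sum]
      ring_nf
    set ξ : ℝ := Finset.univ.sup' Finset.univ_nonempty
        (fun i : Fin n => α i + (1 - α i) * c) with hξdef
    have hξle : ∀ i, α i + (1 - α i) * c ≤ ξ := by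
      intro i; rw [hξdef]
      exact Finset.le_sup' (fun i : Fin n => α i + (1 - α i) * c) (Finset.mem_univ i)
    have hξ0 : 0 < ξ := by
      obtain ⟨i0⟩ := (inferInstance : Nonempty (Fin n))
      have := (hα i0).1
      have h2 : 0 ≤ (1 - α i0) * c :=
        mul_nonneg (by linarith [(hα i0).2]) hc0
      calc (0:ℝ) < α i0 + (1 - α i0) * c := by linarith
        _ ≤ ξ := hξle i0
    have hξ1 : ξ < 1 := by
      rw [hξdef, Finset.sup'_lt_iff]
      intro i _
      have h1 := (hα i).1
      have h2 := (hα i).2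
      nlinarith
    have key : ∀ t, (∀ i r, 0 ≤ P t i r) ∧ (∀ i, ∑ r, P t i r ≤ ξ ^ t) := by
      intro t
      induction t with
      | zero => exact ⟨hP0, by simpa using hP1⟩
      | succ t ih =>
        obtain ⟨hpos, hsum⟩ := ih
        have hα1 : ∀ i, (0:ℝ) ≤ 1 - α i := fun i => by linarith [(hα i).2]
        refine ⟨fun i r => ?_, fun i => ?_⟩
        · rw [hentry]
          exact add_nonneg
            (mul_nonneg (hα i).1.le (Finset.sum_nonneg fun j _ =>
              mul_nonneg (hA0 i j) (hpos j r)))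
            (mul_nonneg (hα1 i) (Finset.sum_nonneg fun s _ =>
              mul_nonneg (hpos i s) (hΔ0 s r)))
        · have hrow : ∑ r, P (t+1) i r
              = α i * ∑ j, Atil i j * ∑ r, P t j r
                + (1 - α i) * ∑ s, P t i s * ∑ r, Δ₀ s r := by
            have e1 : ∑ r, ∑ j, Atil i j * P t j r
                = ∑ j, Atil i j * ∑ r, P t j r := by
              rw [Finset.sum_comm]; simp [Finset.mul_sum]
            have e2 : ∑ r, ∑ s, P t i s * Δ₀ s r
                = ∑ s, P t i s * ∑ r, Δ₀ s r := by
              rw [Finset.sum_comm]; simp [Finset.mul_sum]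
            simp only [hentry, Finset.sum_add_distrib, ← Finset.mul_sum, e1, e2]
          rw [hrow]
          have hb1 : ∑ j, Atil i j * ∑ r, P t j r ≤ ξ ^ t := by
            calc ∑ j, Atil i j * ∑ r, P t j r
                ≤ ∑ j, Atil i j * ξ ^ t :=
                  Finset.sum_le_sum fun j _ =>
                    mul_le_mul_of_nonneg_left (hsum j) (hA0 i j)
              _ = ξ ^ t := by rw [← Finset.sum_mul, hA1 i, one_mul]
          have hb2 : ∑ s, P t i s * ∑ r, Δ₀ s r ≤ c * ξ ^ t := by
            calc ∑ s, P t i s * ∑ r, Δ₀ s r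
                ≤ ∑ s, P t i s * c :=
                  Finset.sum_le_sum fun s _ =>
                    mul_le_mul_of_nonneg_left (hΔrow s) (hpos i s)
              _ = c * ∑ s, P t i s := by rw [← Finset.sum_mul]; ring
              _ ≤ c * ξ ^ t := mul_le_mul_of_nonneg_left (hsum i) hc0
          have hξt : (0:ℝ) ≤ ξ ^ t := pow_nonneg hξ0.le t
          calc α i * ∑ j, Atil i j * ∑ r, P t j r
                + (1 - α i) * ∑ s, P t i s * ∑ r, Δ₀ s r
              ≤ α i * ξ ^ t + (1 - α i) * (c * ξ ^ t) := by
                exact add_le_add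
                  (mul_le_mul_of_nonneg_left hb1 (hα i).1.le)
                  (mul_le_mul_of_nonneg_left hb2 (hα1 i))
            _ = (α i + (1 - α i) * c) * ξ ^ t := by ring
            _ ≤ ξ * ξ ^ t := mul_le_mul_of_nonneg_right (hξle i) hξt
            _ = ξ ^ (t+1) := by rw [pow_succ]; ring
    refine ⟨1, one_pos, ξ, hξ0, hξ1, fun t => ?_⟩
    rw [one_mul]
    apply ciSup_le
    intro i
    calc ∑ r, |P t i r| = ∑ r, P t i r := by
          refine Finset.sum_congr rfl fun r _ => abs_of_nonneg ((key t).1 i r)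
      _ ≤ ξ ^ t := (key t).2 i
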